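/- Let B be an N×N matrix over a field, let w ≠ 0 satisfy Bw = λw, let ψ be a vector with ψᵀw ≠ 0, and set v* = ((λ − 1)/(ψᵀw))·w. Then the characteristic polynomials satisfy (X − λ)·charpoly(B − v*ψᵀ) = (X − 1)·charpoly(B). In particular, the eigenvalue spectrum of B − v*ψᵀ is obtained from that of B by replacing one copy of λ with 1, so the eigenvalues of the derivative (1/λ)(B − v*ψᵀ) of the return map at the fixed point are 1/λ together with μ/λ for the remaining eigenvalues μ of B. -/

import Mathlib

open Matrix Polynomial

set_option maxHeartbeats 1000000 in
/-- If `Bw = λw` with `w ≠ 0`, `ψᵀw ≠ 0`, and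
`v* = ((λ − 1)/(ψᵀw))·w`, then the characteristic polynomials satisfy
`(X − λ)·charpoly(B − v*ψᵀ) = (X − 1)·charpoly(B)`: the spectrum of `B − v*ψᵀ` is
that of `B` with one copy of `λ` replaced by `1`. -/
theorem stmt10 (K : Type*) [Field K] (N : ℕ) (B : Matrix (Fin N) (Fin N) K)
    (ψ w : Fin N → K) (lam : K)
    (hw : w ≠ 0) (heig : B.mulVec w = lam • w) (hψw : ψ ⬝ᵥ w ≠ 0)
    (vstar : Fin N → K) (hv : vstar = ((lam - 1) / (ψ ⬝ᵥ w)) • w) :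
    (X - C lam) * (B - Matrix.vecMulVec vstar ψ).charpoly
      = (X - C 1) * B.charpoly := by
  classical
  set c : K := (lam - 1) / (ψ ⬝ᵥ w) with hc
  set A : Matrix (Fin N) (Fin N) K := B - Matrix.vecMulVec vstar ψ with hAdef
  have hcψw : c * (ψ ⬝ᵥ w) = lam - 1 := div_mul_cancel₀ _ hψw
  -- `A *ᵥ w = w`
  have hvecw : (Matrix.vecMulVec vstar ψ).mulVec w = (ψ ⬝ᵥ w) • vstar := by
    ext i
    rw [Matrix.mulVec, dotProduct]
    simp only [Matrix.vecMulVec_apply, Pi.smul_apply, smul_eq_mul, dotProduct,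
      Finset.sum_mul]
    exact Finset.sum_congr rfl fun j _ => by ring
  have hvecw2 : (ψ ⬝ᵥ w) • vstar = (lam - 1) • w := by
    rw [hv, smul_smul, mul_comm, hcψw]
  have hAw : A.mulVec w = w := by
    rw [hAdef, Matrix.sub_mulVec, heig, hvecw, hvecw2]
    ext i; simp; ring
  -- work in the fraction field of `K[X]`
  set F := FractionRing (Polynomial K)
  set f : Polynomial K →+* F := algebraMap (Polynomial K) F with hf
  have hinj : Function.Injective f := IsFractionRing.injective _ _
  apply hinj
  set g : K →+* F := f.comp (C : K →+* Polynomial K) with hg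
  set t : F := f X with ht
  have ht1 : t - 1 ≠ 0 := by
    have h0 : (X - C 1 : Polynomial K) ≠ 0 := Polynomial.X_sub_C_ne_zero 1
    have := (map_ne_zero_iff f hinj).mpr h0
    simpa [ht, map_sub] using this
  set M : Matrix (Fin N) (Fin N) F := (charmatrix A).map f with hM
  have hdetM : f A.charpoly = M.det := by
    rw [Matrix.charpoly, RingHom.map_det, RingHom.mapMatrix_apply, hM]
  have hMunit : IsUnit M.det := by
    rw [← hdetM]
    exact isUnit_iff_ne_zero.mpr
      ((map_ne_zero_iff f hinj).mpr (A.charpoly_monic.ne_zero))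
  -- eigenvector over `F`
  set u : Fin N → F := fun i => f (C (w i)) with hu
  have hMu : M.mulVec u = (t - 1) • u := by
    ext i
    have h1 : f ((charmatrix A *ᵥ (⇑(C : K →+* Polynomial K) ∘ w)) i) = (M *ᵥ u) i := by
      rw [RingHom.map_mulVec, hM]
      rfl
    have e2 : ∑ j, C (A i j) * C (w j) = (C (w i) : Polynomial K) := by
      have e3 : (C (∑ j, A i j * w j) : Polynomial K) = ∑ j, C (A i j) * C (w j) := by
        rw [map_sum]
        exact Finset.sum_congr rfl fun j _ => by rw [_root_.map_mul]
      rw [← e3]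
      have : ∑ j, A i j * w j = (A *ᵥ w) i := rfl
      rw [this, hAw]
    have h2 : (charmatrix A *ᵥ (⇑(C : K →+* Polynomial K) ∘ w)) i
        = (X - 1) * C (w i) := by
      have e1 : (charmatrix A *ᵥ (⇑(C : K →+* Polynomial K) ∘ w)) i
          = ∑ j, charmatrix A i j * C (w j) := rfl
      rw [e1]
      simp only [charmatrix_apply, sub_mul, Finset.sum_sub_distrib]
      rw [Finset.sum_eq_single i
        (fun j _ hj => by rw [Matrix.diagonal_apply_ne' _ hj, zero_mul])
        (fun h => absurd (Finset.mem_univ i) h), Matrix.diagonal_apply_eq, e2]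
      ring
    rw [← h1, h2, _root_.map_mul, map_sub, _root_.map_one]
    simp only [Pi.smul_apply, smul_eq_mul, hu, ht]
  have hMinvu : M⁻¹.mulVec u = (t - 1)⁻¹ • u := by
    have h4 : M⁻¹ *ᵥ (M *ᵥ u) = u := by
      rw [Matrix.mulVec_mulVec, Matrix.nonsing_inv_mul _ hMunit, Matrix.one_mulVec]
    rw [hMu, Matrix.mulVec_smul] at h4
    calc M⁻¹ *ᵥ u = (t - 1)⁻¹ • ((t - 1) • (M⁻¹ *ᵥ u)) := by
          rw [smul_smul, inv_mul_cancel₀ ht1, one_smul]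
      _ = (t - 1)⁻¹ • u := by rw [h4]
  -- charmatrix relation
  set MB : Matrix (Fin N) (Fin N) F := (charmatrix B).map f with hMB
  have hdetMB : f B.charpoly = MB.det := by
    rw [Matrix.charpoly, RingHom.map_det, RingHom.mapMatrix_apply, hMB]
  have hrel : MB = M + Matrix.replicateCol (Fin 1) (fun i => -(g (vstar i))) *
      Matrix.replicateRow (Fin 1) (fun i => g (ψ i)) := by
    have e : Matrix.replicateCol (Fin 1) (fun i => -(g (vstar i))) *
        Matrix.replicateRow (Fin 1) (fun i => g (ψ i))
        = Matrix.vecMulVec (fun i => -(g (vstar i))) (fun i => g (ψ i)) := by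
      ext i j; simp [Matrix.mul_apply, Matrix.vecMulVec_apply]
    rw [e]
    ext i j
    simp only [hMB, hM, Matrix.map_apply, Matrix.add_apply, Matrix.vecMulVec_apply,
      charmatrix, Matrix.sub_apply, RingHom.mapMatrix_apply, hAdef, map_sub,
      Pi.neg_apply, hg, RingHom.comp_apply]
    simp only [_root_.map_mul]
    ring
  -- matrix determinant lemma
  have hdet : MB.det = M.det * (1 + Matrix.replicateRow (Fin 1) (fun i => g (ψ i)) * M⁻¹ *
      Matrix.replicateCol (Fin 1) (fun i => -(g (vstar i)))).det := by
    rw [hrel]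
    exact Matrix.det_add_replicateCol_mul_replicateRow hMunit _ _
  have hscalar : (1 + Matrix.replicateRow (Fin 1) (fun i => g (ψ i)) * M⁻¹ *
      Matrix.replicateCol (Fin 1) (fun i => -(g (vstar i)))).det
      = 1 - (g lam - 1) * (t - 1)⁻¹ := by
    rw [Matrix.det_unique]
    rw [show Matrix.replicateRow (Fin 1) (fun i => g (ψ i)) * M⁻¹
        = Matrix.replicateRow (Fin 1) ((fun i => g (ψ i)) ᵥ* M⁻¹) from (Matrix.replicateRow_vecMul _ _).symm]
    rw [Matrix.add_apply, Matrix.one_apply_eq, Matrix.replicateRow_mul_replicateCol_apply]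
    rw [← Matrix.dotProduct_mulVec]
    have hneg : (fun i => -(g (vstar i))) = -(fun i => g (vstar i)) := rfl
    rw [hneg, Matrix.mulVec_neg, dotProduct_neg]
    have hvu : (fun i => g (vstar i)) = g c • u := by
      ext i
      simp only [hv, Pi.smul_apply, smul_eq_mul, hu, hg, RingHom.comp_apply]
      rw [← _root_.map_mul, ← _root_.map_mul]
    rw [hvu, Matrix.mulVec_smul, hMinvu, smul_smul, dotProduct_smul]
    have hdp : (fun i => g (ψ i)) ⬝ᵥ u = g (ψ ⬝ᵥ w) := by
      simp only [dotProduct, hu, hg, RingHom.comp_apply, ← _root_.map_mul,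
        ← map_sum]
    rw [hdp, smul_eq_mul]
    have hkey : g c * (t - 1)⁻¹ * g (ψ ⬝ᵥ w) = (g lam - 1) * (t - 1)⁻¹ := by
      have h5 : g c * g (ψ ⬝ᵥ w) = g lam - 1 := by
        rw [← _root_.map_mul, hcψw, map_sub, _root_.map_one]
      calc g c * (t - 1)⁻¹ * g (ψ ⬝ᵥ w) = g c * g (ψ ⬝ᵥ w) * (t - 1)⁻¹ := by ring
        _ = (g lam - 1) * (t - 1)⁻¹ := by rw [h5]
    rw [hkey]; ring
  -- finish
  have hglam : f (C lam) = g lam := rfl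
  rw [_root_.map_mul, _root_.map_mul, map_sub, map_sub, hdetM, hdetMB, hdet, hscalar, hglam, ← ht, _root_.map_one]
  linear_combination (M.det * (g lam - 1)) * mul_inv_cancel₀ ht1
    + (M.det * (1 - g lam * (t - 1)⁻¹ + (t - 1)⁻¹)) * (map_one f)
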